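/- (Kantorovich-type convergence of the sparse-Newton method) Let P : ℝⁿ → ℝᵐ be continuously differentiable, u⁰ ∈ ℝⁿ, s = ‖P(u⁰)‖_∞, ρ > 0, B_ρ = {u : ‖u − u⁰‖₁ ≤ ρ}. Assume: (A) there is μ₀ > 0 with ‖P'(u⁰)ᵀh‖_∞ ≥ μ₀‖h‖₁ for all h ∈ ℝᵐ; (B) there is L > 0 with ‖(P'(a) − P'(b))v‖_∞ ≤ L‖a−b‖₁‖v‖₁ for all a, b ∈ B_ρ and v ∈ ℝⁿ; and the conditions h := Ls/μ₀² < 1/2 and ((1 − √(1−2h))/h)·(s/μ₀) ≤ ρ hold. Then every sparse-Newton sequence (uᵏ) from u⁰ with unit step-size is well defined (in particular every P'(uᵏ) is surjective), remains in B_ρ, and converges to a point u* with P(u*) = 0 and ‖u⁰ − u*‖₁ ≤ (μ₀/L)·(1 − √(1 − 2Ls/μ₀²)). -/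

import Mathlib

open Filter Topology

/-- The ℓ1-norm on `ℝ^d`: `‖x‖₁ = Σᵢ |xᵢ|`. -/
noncomputable def l1Norm {d : ℕ} (x : Fin d → ℝ) : ℝ := ∑ i, |x i|

/-- The ℓ∞-norm on `ℝ^d`: `‖x‖_∞ = maxᵢ |xᵢ|`. -/
noncomputable def linfNorm {d : ℕ} (x : Fin d → ℝ) : ℝ := ⨆ i, |x i|

/-- The transpose of a continuous linear map `A : ℝⁿ → ℝᵐ` applied to `h ∈ ℝᵐ`:
`(Aᵀ h)ᵢ = Σⱼ Aⱼᵢ hⱼ` where `Aⱼᵢ = (A eᵢ)ⱼ`. -/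
noncomputable def transposeApply {n m : ℕ} (A : (Fin n → ℝ) →L[ℝ] (Fin m → ℝ))
    (h : Fin m → ℝ) : Fin n → ℝ :=
  fun i => ∑ j, A (Pi.single i 1) j * h j



lemma l1Norm_nonneg {d : ℕ} (x : Fin d → ℝ) : 0 ≤ l1Norm x :=
  Finset.sum_nonneg fun i _ => abs_nonneg _

lemma l1Norm_zero {d : ℕ} : l1Norm (0 : Fin d → ℝ) = 0 := by
  simp [l1Norm]

lemma l1Norm_neg {d : ℕ} (x : Fin d → ℝ) : l1Norm (-x) = l1Norm x := by
  simp [l1Norm]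

lemma l1Norm_add_le {d : ℕ} (x y : Fin d → ℝ) : l1Norm (x + y) ≤ l1Norm x + l1Norm y := by
  rw [l1Norm, l1Norm, l1Norm, ← Finset.sum_add_distrib]
  exact Finset.sum_le_sum fun i _ => abs_add_le _ _

lemma l1Norm_smul {d : ℕ} (c : ℝ) (x : Fin d → ℝ) : l1Norm (c • x) = |c| * l1Norm x := by
  simp [l1Norm, Finset.mul_sum, abs_mul]

lemma l1Norm_single {d : ℕ} (i : Fin d) (c : ℝ) : l1Norm (Pi.single i c) = |c| := by
  simp only [l1Norm, Pi.single_apply, apply_ite abs, abs_zero]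
  simp

lemma linfNorm_eq_norm {d : ℕ} (x : Fin d → ℝ) : linfNorm x = ‖x‖ := by
  have h1 : linfNorm x ≤ ‖x‖ := by
    rcases Nat.eq_zero_or_pos d with h | h
    · subst h
      rw [show linfNorm x = 0 from Real.iSup_of_isEmpty _]
      positivity
    · haveI : Nonempty (Fin d) := Fin.pos_iff_nonempty.mp h
      apply ciSup_le
      intro i
      simpa [Real.norm_eq_abs] using norm_le_pi_norm x i
  have h2 : ‖x‖ ≤ linfNorm x := by
    have hnn : 0 ≤ linfNorm x := Real.iSup_nonneg fun i => abs_nonneg _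
    rw [pi_norm_le_iff_of_nonneg hnn]
    intro i
    rw [Real.norm_eq_abs]
    exact le_ciSup (f := fun i => |x i|) (Set.Finite.bddAbove (Set.finite_range _)) i
  linarith

lemma norm_le_l1Norm {d : ℕ} (x : Fin d → ℝ) : ‖x‖ ≤ l1Norm x := by
  rw [pi_norm_le_iff_of_nonneg (l1Norm_nonneg x)]
  intro i
  rw [Real.norm_eq_abs]
  exact Finset.single_le_sum (f := fun i => |x i|) (fun j _ => abs_nonneg _) (Finset.mem_univ i)

lemma linfNorm_nonneg {d : ℕ} (x : Fin d → ℝ) : 0 ≤ linfNorm x := by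
  rw [linfNorm_eq_norm]; positivity

lemma abs_le_linfNorm {d : ℕ} (x : Fin d → ℝ) (i : Fin d) : |x i| ≤ linfNorm x := by
  rw [linfNorm_eq_norm]
  simpa [Real.norm_eq_abs] using norm_le_pi_norm x i



/-- decomposition into single basis vectors -/
lemma eq_sum_single {d : ℕ} (x : Fin d → ℝ) :
    x = ∑ i, x i • (Pi.single i 1 : Fin d → ℝ) := by
  have hterm : ∀ i, x i • (Pi.single i 1 : Fin d → ℝ) = Pi.single i (x i) := by
    intro i
    funext j
    by_cases hj : j = i
    · subst hj; simp
    · simp [Pi.single_eq_of_ne hj]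
  rw [Finset.sum_congr rfl fun i _ => hterm i, Finset.univ_sum_single]

/-- duality: the linf norm is attained by pairing with an l1-unit vector. -/
lemma exists_dual {d : ℕ} (x : Fin d → ℝ) :
    ∃ v : Fin d → ℝ, l1Norm v ≤ 1 ∧ ∑ i, v i * x i = linfNorm x := by
  rcases Nat.eq_zero_or_pos d with h | h
  · refine ⟨0, ?_, ?_⟩
    · simp [l1Norm_zero]
    · subst h
      rw [show linfNorm x = 0 from Real.iSup_of_isEmpty _]
      simp
  · haveI : Nonempty (Fin d) := Fin.pos_iff_nonempty.mp h
    obtain ⟨i0, hi0⟩ := Finite.exists_max (fun i => |x i|)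
    have hmax : linfNorm x = |x i0| := by
      apply le_antisymm
      · exact ciSup_le hi0
      · exact le_ciSup (f := fun i => |x i|) (Set.Finite.bddAbove (Set.finite_range _)) i0
    refine ⟨Pi.single i0 (if 0 ≤ x i0 then (1:ℝ) else -1), ?_, ?_⟩
    · rw [l1Norm_single]
      split <;> norm_num
    · rw [hmax]
      rw [Finset.sum_eq_single i0]
      · simp only [Pi.single_eq_same]
        split <;> rename_i hx
        · rw [one_mul, abs_of_nonneg hx]
        · rw [abs_of_neg (not_le.mp hx)]; ring
      · intro b _ hb
        simp [Pi.single_eq_of_ne hb]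
      · intro hmem; exact absurd (Finset.mem_univ i0) hmem

/-- linearity of transposeApply in the matrix argument, as needed -/
lemma transposeApply_sub {n m : ℕ} (A B : (Fin n → ℝ) →L[ℝ] (Fin m → ℝ)) (h : Fin m → ℝ) :
    transposeApply (A - B) h = transposeApply A h - transposeApply B h := by
  funext i
  simp [transposeApply, sub_mul, Finset.sum_sub_distrib]

/-- bound on transpose via entrywise bounds coming from the operator bound -/
lemma linf_transposeApply_le {n m : ℕ} (M : (Fin n → ℝ) →L[ℝ] (Fin m → ℝ)) (C : ℝ)
    (hC : 0 ≤ C) (hM : ∀ v, linfNorm (M v) ≤ C * l1Norm v) (h : Fin m → ℝ) :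
    linfNorm (transposeApply M h) ≤ C * l1Norm h := by
  rw [linfNorm_eq_norm]
  rw [pi_norm_le_iff_of_nonneg (mul_nonneg hC (l1Norm_nonneg h))]
  intro i
  rw [Real.norm_eq_abs, transposeApply]
  calc |∑ j, M (Pi.single i 1) j * h j| ≤ ∑ j, |M (Pi.single i 1) j * h j| :=
        Finset.abs_sum_le_sum_abs _ _
    _ ≤ ∑ j, C * |h j| := by
        apply Finset.sum_le_sum
        intro j _
        rw [abs_mul]
        apply mul_le_mul_of_nonneg_right _ (abs_nonneg _)
        calc |M (Pi.single i 1) j| ≤ linfNorm (M (Pi.single i 1)) := abs_le_linfNorm _ j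
          _ ≤ C * l1Norm (Pi.single i (1:ℝ)) := hM _
          _ = C := by rw [l1Norm_single]; simp
    _ = C * l1Norm h := by rw [l1Norm, Finset.mul_sum]

lemma l1Norm_continuous {d : ℕ} : Continuous (l1Norm (d := d)) := by
  unfold l1Norm
  exact continuous_finset_sum _ fun i _ => (continuous_apply i).abs

/-- Key quantitative surjectivity lemma via separation. -/
lemma key_surj {n m : ℕ} (A : (Fin n → ℝ) →L[ℝ] (Fin m → ℝ)) (μ : ℝ) (hμ : 0 < μ)
    (hA : ∀ h : Fin m → ℝ, μ * l1Norm h ≤ linfNorm (transposeApply A h)) (b : Fin m → ℝ) :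
    ∃ v, A v = b ∧ μ * l1Norm v ≤ linfNorm b := by
  -- first: the unit-ball statement
  have main : ∀ c : Fin m → ℝ, linfNorm c ≤ μ → ∃ v, l1Norm v ≤ 1 ∧ A v = c := by
    intro c hc
    set S : Set (Fin m → ℝ) := A '' {v | l1Norm v ≤ 1} with hS
    have hset : Convex ℝ {v : Fin n → ℝ | l1Norm v ≤ 1} := by
      intro x hx y hy a bb ha hb hab
      simp only [Set.mem_setOf_eq] at *
      calc l1Norm (a • x + bb • y) ≤ l1Norm (a • x) + l1Norm (bb • y) := l1Norm_add_le _ _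
        _ = |a| * l1Norm x + |bb| * l1Norm y := by rw [l1Norm_smul, l1Norm_smul]
        _ = a * l1Norm x + bb * l1Norm y := by rw [abs_of_nonneg ha, abs_of_nonneg hb]
        _ ≤ a * 1 + bb * 1 := by
            gcongr
        _ = 1 := by linarith
    have hconv : Convex ℝ S := hset.linear_image (A : (Fin n → ℝ) →ₗ[ℝ] (Fin m → ℝ))
    have hcpt : IsCompact S := by
      apply IsCompact.image ?_ A.continuous
      apply Metric.isCompact_of_isClosed_isBounded
      · exact isClosed_le l1Norm_continuous continuous_const
      · apply Metric.isBounded_closedBall (x := (0 : Fin n → ℝ)) (r := 1) |>.subset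
        intro v hv
        simp only [Metric.mem_closedBall, dist_zero_right]
        exact le_trans (norm_le_l1Norm v) hv
    have hclosed : IsClosed S := hcpt.isClosed
    by_contra hcS
    obtain ⟨f, r, hfs, hfb⟩ := geometric_hahn_banach_closed_point hconv hclosed hcS
    -- h' j = f (e_j)
    set h' : Fin m → ℝ := fun j => f (Pi.single j 1) with hh'
    have hfx : ∀ x : Fin m → ℝ, f x = ∑ j, x j * h' j := by
      intro x
      conv_lhs => rw [eq_sum_single x]
      rw [map_sum]
      congr 1
      funext j
      rw [map_smul]
      simp [hh', smul_eq_mul]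
    -- the sup over S of f is ≥ linfNorm (Aᵀ h')
    obtain ⟨v, hv1, hv2⟩ := exists_dual (transposeApply A h')
    have hAv : f (A v) = linfNorm (transposeApply A h') := by
      rw [hfx]
      rw [← hv2]
      -- ∑ j (A v) j * h' j = ∑ i v i * (Aᵀ h') i
      conv_lhs => rw [eq_sum_single v]
      have hterm : ∀ i, v i * transposeApply A h' i
          = ∑ j, v i * (A (Pi.single i 1) j * h' j) := by
        intro i
        rw [transposeApply, Finset.mul_sum]
      rw [Finset.sum_congr rfl fun i _ => hterm i, Finset.sum_comm, map_sum]
      apply Finset.sum_congr rfl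
      intro j _
      rw [Finset.sum_apply, Finset.sum_mul]
      apply Finset.sum_congr rfl
      intro i _
      rw [map_smul, Pi.smul_apply, smul_eq_mul, mul_assoc]
    have hvS : A v ∈ S := Set.mem_image_of_mem _ hv1
    have h1 : linfNorm (transposeApply A h') < r := hAv ▸ hfs _ hvS
    have h2 : f c ≤ μ * l1Norm h' := by
      rw [hfx]
      calc ∑ j, c j * h' j ≤ ∑ j, |c j * h' j| := Finset.sum_le_sum fun j _ => le_abs_self _
        _ ≤ ∑ j, μ * |h' j| := by
            apply Finset.sum_le_sum
            intro j _
            rw [abs_mul]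
            exact mul_le_mul_of_nonneg_right ((abs_le_linfNorm c j).trans hc) (abs_nonneg _)
        _ = μ * l1Norm h' := by rw [l1Norm, Finset.mul_sum]
    linarith [hA h']
  -- scale
  rcases eq_or_lt_of_le (linfNorm_nonneg b) with h0 | h0
  · have hb0 : b = 0 := by
      have : ‖b‖ = 0 := by rw [← linfNorm_eq_norm, ← h0]
      exact norm_eq_zero.mp this
    refine ⟨0, by simp [hb0], by simp [l1Norm_zero, linfNorm_nonneg]⟩
  · have hside : linfNorm ((μ / linfNorm b) • b) ≤ μ := by
      rw [linfNorm_eq_norm, norm_smul, Real.norm_eq_abs,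
        abs_of_nonneg (div_nonneg hμ.le h0.le), ← linfNorm_eq_norm]
      rw [div_mul_cancel₀ _ (ne_of_gt h0)]
    obtain ⟨v', hv1, hv2⟩ := main ((μ / linfNorm b) • b) hside
    refine ⟨(linfNorm b / μ) • v', ?_, ?_⟩
    · rw [map_smul, hv2, smul_smul]
      have h1 : linfNorm b / μ * (μ / linfNorm b) = 1 := by
        field_simp
      rw [h1, one_smul]
    · rw [l1Norm_smul, abs_of_nonneg (div_nonneg h0.le hμ.le)]
      have h1 : μ * (linfNorm b / μ * l1Norm v') = linfNorm b * l1Norm v' := by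
        field_simp
      rw [h1]
      nlinarith [l1Norm_nonneg v']

lemma taylor_bound {n m : ℕ} (P : (Fin n → ℝ) → (Fin m → ℝ)) (hP : ContDiff ℝ 1 P)
    (L : ℝ) (hL : 0 ≤ L) (B : Set (Fin n → ℝ)) (hBconv : Convex ℝ B)
    (hLip : ∀ a ∈ B, ∀ b ∈ B, ∀ v : Fin n → ℝ,
      linfNorm ((fderiv ℝ P a - fderiv ℝ P b) v) ≤ L * l1Norm (a - b) * l1Norm v)
    (a b : Fin n → ℝ) (ha : a ∈ B) (hb : b ∈ B) :
    linfNorm (P b - P a - fderiv ℝ P a (b - a)) ≤ L / 2 * (l1Norm (b - a))^2 := by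
  set d := l1Norm (b - a) with hd
  have hd0 : 0 ≤ d := l1Norm_nonneg _
  set line : ℝ → (Fin n → ℝ) := fun t => a + t • (b - a) with hline
  have hlinemem : ∀ t ∈ Set.Icc (0:ℝ) 1, line t ∈ B := by
    intro t ht
    have : line t = (1 - t) • a + t • b := by
      simp only [hline]
      module
    rw [this]
    exact hBconv ha hb (by linarith [ht.1, ht.2]) ht.1 (by ring)
  set v0 : Fin m → ℝ := fderiv ℝ P a (b - a) with hv0
  set g : ℝ → (Fin m → ℝ) := fun t => P (line t) - t • v0 with hg
  set g' : ℝ → (Fin m → ℝ) := fun t => fderiv ℝ P (line t) (b - a) - v0 with hg'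
  have hlinederiv : ∀ t : ℝ, HasDerivAt line (b - a) t := by
    intro t
    have h1 : HasDerivAt (fun t : ℝ => t • (b - a)) ((1:ℝ) • (b - a)) t :=
      (hasDerivAt_id t).smul_const (b - a)
    rw [one_smul] at h1
    exact h1.const_add a
  have hgderiv : ∀ t : ℝ, HasDerivAt g (g' t) t := by
    intro t
    have h1 : HasFDerivAt P (fderiv ℝ P (line t)) (line t) :=
      (hP.differentiable one_ne_zero (line t)).hasFDerivAt
    have h2 : HasDerivAt (fun t => P (line t)) (fderiv ℝ P (line t) (b - a)) t :=
      h1.comp_hasDerivAt t (hlinederiv t)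
    have h3 : HasDerivAt (fun t : ℝ => t • v0) ((1:ℝ) • v0) t :=
      (hasDerivAt_id t).smul_const v0
    rw [one_smul] at h3
    exact h2.sub h3
  have hcontg' : Continuous g' := by
    have hc1 : Continuous fun t => fderiv ℝ P (line t) :=
      (hP.continuous_fderiv one_ne_zero).comp (by continuity)
    exact (hc1.clm_apply continuous_const).sub continuous_const
  have hint : ∫ t in (0:ℝ)..1, g' t = g 1 - g 0 := by
    apply intervalIntegral.integral_eq_sub_of_hasDerivAt
    · intro t _
      exact hgderiv t
    · exact (hcontg'.intervalIntegrable 0 1)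
  have hbound : ∀ t ∈ Set.Icc (0:ℝ) 1, ‖g' t‖ ≤ (L * d^2) * t := by
    intro t ht
    have hmem := hlinemem t ht
    have := hLip (line t) hmem a ha (b - a)
    have hlt : line t - a = t • (b - a) := by simp [hline]
    rw [hlt, l1Norm_smul, abs_of_nonneg ht.1] at this
    have heq : (fderiv ℝ P (line t) - fderiv ℝ P a) (b - a) = g' t := by
      simp [hg', hv0, ContinuousLinearMap.sub_apply]
    rw [heq, linfNorm_eq_norm] at this
    calc ‖g' t‖ ≤ L * (t * d) * d := this
      _ = (L * d^2) * t := by ring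
  have hnormint : ‖g 1 - g 0‖ ≤ L * d^2 / 2 := by
    rw [← hint]
    calc ‖∫ t in (0:ℝ)..1, g' t‖ ≤ ∫ t in (0:ℝ)..1, ‖g' t‖ :=
          intervalIntegral.norm_integral_le_integral_norm zero_le_one
      _ ≤ ∫ t in (0:ℝ)..1, (L * d^2) * t := by
          apply intervalIntegral.integral_mono_on zero_le_one
          · exact hcontg'.norm.intervalIntegrable 0 1
          · exact (continuous_const.mul continuous_id).intervalIntegrable 0 1
          · exact hbound
      _ = L * d^2 / 2 := by
          rw [intervalIntegral.integral_const_mul]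
          simp [integral_id]
          ring
  have hg1 : g 1 = P b - v0 := by
    simp only [hg, hline, one_smul]
    have h2 : a + (b - a) = b := by abel
    rw [h2]
  have hg0 : g 0 = P a := by simp [hg, hline]
  rw [linfNorm_eq_norm]
  have : P b - P a - v0 = g 1 - g 0 := by rw [hg1, hg0]; abel
  rw [this]
  calc ‖g 1 - g 0‖ ≤ L * d^2 / 2 := hnormint
    _ = L / 2 * d^2 := by ring



/-- scalar Newton majorant sequence for `f(t) = L/2 t² - μ0 t + s` -/
noncomputable def tseq (L μ0 s : ℝ) : ℕ → ℝ
  | 0 => 0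
  | k+1 => tseq L μ0 s k
      + (L/2 * (tseq L μ0 s k)^2 - μ0 * tseq L μ0 s k + s) / (μ0 - L * tseq L μ0 s k)

lemma tseq_succ (L μ0 s : ℝ) (k : ℕ) : tseq L μ0 s (k+1) = tseq L μ0 s k
      + (L/2 * (tseq L μ0 s k)^2 - μ0 * tseq L μ0 s k + s) / (μ0 - L * tseq L μ0 s k) := rfl

lemma tseq_main {L μ0 s : ℝ} (hL : 0 < L) (hμ0 : 0 < μ0) (hs : 0 ≤ s)
    (hcond : 2*L*s < μ0^2) :
    ∀ k, 0 ≤ tseq L μ0 s k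
      ∧ tseq L μ0 s k ≤ (μ0 - Real.sqrt (μ0^2 - 2*L*s))/L
      ∧ 0 ≤ L/2 * (tseq L μ0 s k)^2 - μ0 * tseq L μ0 s k + s
      ∧ tseq L μ0 s k ≤ tseq L μ0 s (k+1)
      ∧ 0 < μ0 - L * tseq L μ0 s k
      ∧ L/2 * (tseq L μ0 s (k+1))^2 - μ0 * tseq L μ0 s (k+1) + s
          = L/2 * (tseq L μ0 s (k+1) - tseq L μ0 s k)^2 := by
  set D := Real.sqrt (μ0^2 - 2*L*s) with hD
  have hD2 : D^2 = μ0^2 - 2*L*s := Real.sq_sqrt (by nlinarith)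
  have hDpos : 0 < D := Real.sqrt_pos.mpr (by nlinarith)
  have hDle : D ≤ μ0 := by nlinarith
  -- the key step facts, given the invariant at k
  have step : ∀ k, 0 ≤ tseq L μ0 s k → tseq L μ0 s k ≤ (μ0 - D)/L →
      0 ≤ L/2 * (tseq L μ0 s k)^2 - μ0 * tseq L μ0 s k + s →
      (tseq L μ0 s k ≤ tseq L μ0 s (k+1)
        ∧ tseq L μ0 s (k+1) ≤ (μ0 - D)/L
        ∧ 0 < μ0 - L * tseq L μ0 s k
        ∧ L/2 * (tseq L μ0 s (k+1))^2 - μ0 * tseq L μ0 s (k+1) + s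
            = L/2 * (tseq L μ0 s (k+1) - tseq L μ0 s k)^2) := by
    intro k h0 h1 h2
    set t := tseq L μ0 s k with ht
    have he : 0 ≤ μ0 - D - L * t := by
      have := (le_div_iff₀ hL).mp h1
      linarith
    have hden : 0 < μ0 - L * t := by linarith
    set Δ := (L/2 * t^2 - μ0*t + s) / (μ0 - L*t) with hΔ
    have hΔeq : Δ * (μ0 - L*t) = L/2*t^2 - μ0*t + s := div_mul_cancel₀ _ (ne_of_gt hden)
    have hΔ0 : 0 ≤ Δ := div_nonneg h2 hden.le
    have hsucc : tseq L μ0 s (k+1) = t + Δ := tseq_succ L μ0 s k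
    have hfq : L/2*(t+Δ)^2 - μ0*(t+Δ) + s = L/2 * Δ^2 := by
      linear_combination (-1 : ℝ) * hΔeq
    refine ⟨by rw [hsucc]; linarith, ?_, hden, ?_⟩
    · rw [hsucc, le_div_iff₀ hL]
      -- want (t + Δ) * L ≤ μ0 - D
      have hkey : L * (Δ * (μ0 - L*t)) = L * (L/2*t^2 - μ0*t + s) := by rw [hΔeq]
      nlinarith [sq_nonneg (μ0 - D - L*t), mul_nonneg he hden.le, hΔ0, hden]
    · rw [hsucc]
      linear_combination hfq
  intro k
  induction k with
  | zero =>
    have h0 : tseq L μ0 s 0 = 0 := rfl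
    have hb : (0:ℝ) ≤ (μ0 - D)/L := div_nonneg (by linarith) hL.le
    have h2 : 0 ≤ L/2 * (tseq L μ0 s 0)^2 - μ0 * tseq L μ0 s 0 + s := by
      rw [h0]; simpa using hs
    obtain ⟨a, b, c, d⟩ := step 0 (le_of_eq h0.symm) (by rw [h0]; exact hb) h2
    exact ⟨le_of_eq h0.symm, by rw [h0]; exact hb, h2, a, c, d⟩
  | succ k ih =>
    obtain ⟨h0, h1, h2, hmono, hden, hfq⟩ := ih
    obtain ⟨hm1, hb1, _, _⟩ := step k h0 h1 h2
    have h0' : 0 ≤ tseq L μ0 s (k+1) := le_trans h0 hmono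
    have h2' : 0 ≤ L/2 * (tseq L μ0 s (k+1))^2 - μ0 * tseq L μ0 s (k+1) + s := by
      rw [hfq]; positivity
    obtain ⟨a, b, c, d⟩ := step (k+1) h0' hb1 h2'
    exact ⟨h0', hb1, h2', a, c, d⟩

set_option maxHeartbeats 1600000 in
/-- Kantorovich-type convergence of the sparse-Newton method:
under assumption (A) at `u⁰`, assumption (B) on the ball `B_ρ`, and the
conditions `h = Ls/μ₀² < 1/2`, `((1−√(1−2h))/h)(s/μ₀) ≤ ρ`, every sparse-Newton
sequence from `u⁰` with unit step-size is well defined (each `P'(uᵏ)` is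
surjective), stays in `B_ρ`, and converges to a zero `u*` of `P` with
`‖u⁰ − u*‖₁ ≤ (μ₀/L)(1 − √(1 − 2Ls/μ₀²))`. -/
theorem statement7 {n m : ℕ} (P : (Fin n → ℝ) → (Fin m → ℝ)) (hP : ContDiff ℝ 1 P)
    (u0 : Fin n → ℝ) (s : ℝ) (hs : s = linfNorm (P u0))
    (ρ : ℝ) (hρ : 0 < ρ) (Bρ : Set (Fin n → ℝ)) (hB : Bρ = {v | l1Norm (v - u0) ≤ ρ})
    (μ0 : ℝ) (hμ0 : 0 < μ0)
    (hA : ∀ h : Fin m → ℝ,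
      μ0 * l1Norm h ≤ linfNorm (transposeApply (fderiv ℝ P u0) h))
    (L : ℝ) (hL : 0 < L)
    (hLip : ∀ a ∈ Bρ, ∀ b ∈ Bρ, ∀ v : Fin n → ℝ,
      linfNorm ((fderiv ℝ P a - fderiv ℝ P b) v) ≤ L * l1Norm (a - b) * l1Norm v)
    (hcond1 : L * s / μ0 ^ 2 < 1 / 2)
    (hcond2 : (1 - Real.sqrt (1 - 2 * (L * s / μ0 ^ 2))) / (L * s / μ0 ^ 2)
        * (s / μ0) ≤ ρ)
    -- a sparse-Newton sequence from `u0` with unit step-size: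
    (u w : ℕ → Fin n → ℝ) (hu0 : u 0 = u0)
    (hw_eq : ∀ k, fderiv ℝ P (u k) (w k) = P (u k))
    (hw_min : ∀ k, ∀ v : Fin n → ℝ, fderiv ℝ P (u k) v = P (u k) →
      l1Norm (w k) ≤ l1Norm v)
    (hstep : ∀ k, u (k + 1) = u k - w k) :
    (∀ k, Function.Surjective (fderiv ℝ P (u k))) ∧
    (∀ k, u k ∈ Bρ) ∧
    ∃ ustar : Fin n → ℝ, Tendsto u atTop (𝓝 ustar) ∧ P ustar = 0 ∧
      l1Norm (u0 - ustar) ≤ μ0 / L * (1 - Real.sqrt (1 - 2 * L * s / μ0 ^ 2)) := by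

  -- basic setup
  have hs0 : 0 ≤ s := by rw [hs]; exact linfNorm_nonneg _
  have hμ2 : (0:ℝ) < μ0^2 := by positivity
  have hcond : 2*L*s < μ0^2 := by
    have := (div_lt_iff₀ hμ2).mp hcond1
    nlinarith
  set D := Real.sqrt (μ0^2 - 2*L*s) with hD
  have hD2 : D^2 = μ0^2 - 2*L*s := Real.sq_sqrt (by nlinarith)
  have hDpos : 0 < D := Real.sqrt_pos.mpr (by nlinarith)
  have hDle : D ≤ μ0 := by nlinarith
  set T := (μ0 - D)/L with hT
  have hT0 : 0 ≤ T := div_nonneg (by linarith) hL.le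
  -- the sqrt identity
  have hsqrt : Real.sqrt (1 - 2*(L*s/μ0^2)) = D / μ0 := by
    have h1 : 1 - 2*(L*s/μ0^2) = (μ0^2 - 2*L*s)/μ0^2 := by
      field_simp
    rw [h1, Real.sqrt_div (by nlinarith), Real.sqrt_sq hμ0.le]
  -- T ≤ ρ
  have hTρ : T ≤ ρ := by
    rcases eq_or_lt_of_le hs0 with h0 | h0
    · have hDμ : D = μ0 := by rw [hD, ← h0]; simp [Real.sqrt_sq hμ0.le]
      rw [hT, hDμ]
      simp
      positivity
    · have : (1 - Real.sqrt (1 - 2 * (L * s / μ0 ^ 2))) / (L * s / μ0 ^ 2) * (s / μ0) = T := by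
        rw [hsqrt, hT]
        field_simp
      linarith [hcond2, this.symm.le]
  -- the goal RHS equals T
  have hgoalT : μ0 / L * (1 - Real.sqrt (1 - 2 * L * s / μ0 ^ 2)) = T := by
    have h1 : 2 * L * s / μ0 ^ 2 = 2 * (L * s / μ0 ^ 2) := by ring
    rw [h1, hsqrt, hT]
    field_simp
  -- majorant sequence facts
  set t : ℕ → ℝ := tseq L μ0 s with htseq
  have hprops := tseq_main hL hμ0 hs0 hcond
  have ht_le_T : ∀ k, t k ≤ T := fun k => (hprops k).2.1
  have ht_nonneg : ∀ k, 0 ≤ t k := fun k => (hprops k).1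
  have ht_mono : ∀ k, t k ≤ t (k+1) := fun k => (hprops k).2.2.2.1
  have ht_den : ∀ k, 0 < μ0 - L * t k := fun k => (hprops k).2.2.2.2.1
  -- convexity of the ball
  have hBconv : Convex ℝ Bρ := by
    rw [hB]
    intro x hx y hy a b ha hb hab
    simp only [Set.mem_setOf_eq] at *
    have hsplit : a • x + b • y - u0 = a • (x - u0) + b • (y - u0) + (a + b - 1) • u0 := by
      module
    rw [hab] at hsplit
    simp only [sub_self, zero_smul, add_zero] at hsplit
    rw [hsplit]
    calc l1Norm (a • (x - u0) + b • (y - u0))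
        ≤ l1Norm (a • (x - u0)) + l1Norm (b • (y - u0)) := l1Norm_add_le _ _
      _ = a * l1Norm (x - u0) + b * l1Norm (y - u0) := by
          rw [l1Norm_smul, l1Norm_smul, abs_of_nonneg ha, abs_of_nonneg hb]
      _ ≤ a * ρ + b * ρ := by gcongr
      _ = ρ := by rw [← add_mul, hab, one_mul]
  have hu0mem : u0 ∈ Bρ := by
    rw [hB]
    simp only [Set.mem_setOf_eq, sub_self, l1Norm_zero]
    exact hρ.le
  -- main invariant
  set fq : ℝ → ℝ := fun x => L/2 * x^2 - μ0 * x + s with hfq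
  have hfq_nonneg : ∀ k, 0 ≤ fq (t k) := fun k => (hprops k).2.2.1
  -- lower bound at any point of the ball
  have hlower : ∀ k, l1Norm (u k - u0) ≤ t k → u k ∈ Bρ →
      ∀ h : Fin m → ℝ, (μ0 - L * t k) * l1Norm h
        ≤ linfNorm (transposeApply (fderiv ℝ P (u k)) h) := by
    intro k hk hmem h
    have hA0 := hA h
    have hMdiff : ∀ v : Fin n → ℝ,
        linfNorm ((fderiv ℝ P u0 - fderiv ℝ P (u k)) v)
          ≤ (L * l1Norm (u0 - u k)) * l1Norm v := by
      intro v
      have := hLip u0 hu0mem (u k) hmem v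
      linarith
    have htr := linf_transposeApply_le (fderiv ℝ P u0 - fderiv ℝ P (u k))
      (L * l1Norm (u0 - u k)) (mul_nonneg hL.le (l1Norm_nonneg _)) hMdiff h
    have hsub := transposeApply_sub (fderiv ℝ P u0) (fderiv ℝ P (u k)) h
    have htri : linfNorm (transposeApply (fderiv ℝ P u0) h)
        ≤ linfNorm (transposeApply (fderiv ℝ P u0 - fderiv ℝ P (u k)) h)
          + linfNorm (transposeApply (fderiv ℝ P (u k)) h) := by
      rw [linfNorm_eq_norm, linfNorm_eq_norm, linfNorm_eq_norm, hsub]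
      have := norm_add_le
        (transposeApply (fderiv ℝ P u0) h - transposeApply (fderiv ℝ P (u k)) h)
        (transposeApply (fderiv ℝ P (u k)) h)
      simpa using this
    have hflip : l1Norm (u0 - u k) = l1Norm (u k - u0) := by
      rw [show u0 - u k = -(u k - u0) by abel, l1Norm_neg]
    have hnn : 0 ≤ l1Norm h := l1Norm_nonneg h
    have hband : L * l1Norm (u0 - u k) * l1Norm h ≤ L * t k * l1Norm h := by
      rw [hflip]
      apply mul_le_mul_of_nonneg_right _ hnn
      exact mul_le_mul_of_nonneg_left hk hL.le
    nlinarith [htr, htri, hA0]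
  -- step lemma
  have hstep_main : ∀ k, (l1Norm (u k - u0) ≤ t k ∧ linfNorm (P (u k)) ≤ fq (t k)) →
      ((l1Norm (u (k+1) - u0) ≤ t (k+1) ∧ linfNorm (P (u (k+1))) ≤ fq (t (k+1)))
        ∧ l1Norm (w k) ≤ t (k+1) - t k) := by
    intro k ⟨hk1, hk2⟩
    have hmem : u k ∈ Bρ := by
      rw [hB]
      exact le_trans hk1 (le_trans (ht_le_T k) hTρ)
    have hlow := hlower k hk1 hmem
    obtain ⟨v, hv1, hv2⟩ := key_surj (fderiv ℝ P (u k)) (μ0 - L * t k) (ht_den k)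
      hlow (P (u k))
    have hwk : l1Norm (w k) ≤ fq (t k) / (μ0 - L * t k) := by
      have h1 := hw_min k v hv1
      have h2 : l1Norm v ≤ fq (t k) / (μ0 - L * t k) := by
        rw [le_div_iff₀ (ht_den k)]
        calc l1Norm v * (μ0 - L * t k) = (μ0 - L * t k) * l1Norm v := by ring
          _ ≤ linfNorm (P (u k)) := hv2
          _ ≤ fq (t k) := hk2
      linarith
    have hΔ : t (k+1) - t k = fq (t k) / (μ0 - L * t k) := by
      rw [htseq, tseq_succ]
      simp [hfq, htseq]
    have hwk' : l1Norm (w k) ≤ t (k+1) - t k := by rw [hΔ]; exact hwk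
    have hk1' : l1Norm (u (k+1) - u0) ≤ t (k+1) := by
      have : u (k+1) - u0 = (u k - u0) + (-(w k)) := by rw [hstep k]; abel
      rw [this]
      calc l1Norm ((u k - u0) + (-(w k)))
          ≤ l1Norm (u k - u0) + l1Norm (-(w k)) := l1Norm_add_le _ _
        _ = l1Norm (u k - u0) + l1Norm (w k) := by rw [l1Norm_neg]
        _ ≤ t k + (t (k+1) - t k) := add_le_add hk1 hwk'
        _ = t (k+1) := by ring
    have hmem' : u (k+1) ∈ Bρ := by
      rw [hB]
      exact le_trans hk1' (le_trans (ht_le_T (k+1)) hTρ)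
    have hk2' : linfNorm (P (u (k+1))) ≤ fq (t (k+1)) := by
      have hdiff : u (k+1) - u k = -(w k) := by rw [hstep k]; abel
      have hPid : P (u (k+1)) = P (u (k+1)) - P (u k)
          - fderiv ℝ P (u k) (u (k+1) - u k) := by
        rw [hdiff, map_neg, hw_eq k]
        abel
      have htay := taylor_bound P hP L hL.le Bρ hBconv hLip (u k) (u (k+1)) hmem hmem'
      rw [← hPid] at htay
      have hnorm2 : l1Norm (u (k+1) - u k) = l1Norm (w k) := by
        rw [hdiff, l1Norm_neg]
      rw [hnorm2] at htay
      have hfqid : fq (t (k+1)) = L/2 * (t (k+1) - t k)^2 :=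
        (hprops k).2.2.2.2.2
      rw [hfqid]
      calc linfNorm (P (u (k+1))) ≤ L/2 * (l1Norm (w k))^2 := htay
        _ ≤ L/2 * (t (k+1) - t k)^2 := by
            apply mul_le_mul_of_nonneg_left _ (by positivity)
            exact pow_le_pow_left₀ (l1Norm_nonneg _) hwk' 2
    exact ⟨⟨hk1', hk2'⟩, hwk'⟩
  -- establish the invariant for all k
  have hinv : ∀ k, l1Norm (u k - u0) ≤ t k ∧ linfNorm (P (u k)) ≤ fq (t k) := by
    intro k
    induction k with
    | zero =>
      constructor
      · rw [hu0]
        simp only [sub_self, l1Norm_zero]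
        exact le_of_eq rfl
      · simp only [hfq]
        have ht0 : t 0 = 0 := rfl
        rw [ht0, hu0, hs]
        norm_num
    | succ k ih => exact (hstep_main k ih).1
  have hwbound : ∀ k, l1Norm (w k) ≤ t (k+1) - t k := fun k => (hstep_main k (hinv k)).2
  have hmemall : ∀ k, u k ∈ Bρ := by
    intro k
    rw [hB]
    exact le_trans (hinv k).1 (le_trans (ht_le_T k) hTρ)
  -- surjectivity
  have hsurj : ∀ k, Function.Surjective (fderiv ℝ P (u k)) := by
    intro k b
    obtain ⟨v, hv1, _⟩ := key_surj (fderiv ℝ P (u k)) (μ0 - L * t k) (ht_den k)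
      (hlower k (hinv k).1 (hmemall k)) b
    exact ⟨v, hv1⟩
  refine ⟨hsurj, hmemall, ?_⟩
  -- convergence of the majorant sequence
  have hmono : Monotone t := monotone_nat_of_le_succ ht_mono
  have hbdd : BddAbove (Set.range t) := ⟨T, by rintro x ⟨k, rfl⟩; exact ht_le_T k⟩
  set Tlim := ⨆ k, t k with hTlim
  have htlim : Tendsto t atTop (𝓝 Tlim) := tendsto_atTop_ciSup hmono hbdd
  have hTlimle : Tlim ≤ T := ciSup_le ht_le_T
  have htle : ∀ k, t k ≤ Tlim := fun k => le_ciSup hbdd k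
  -- telescoping bound
  have htel : ∀ j k, j ≤ k → l1Norm (u k - u j) ≤ t k - t j := by
    intro j k hjk
    induction k, hjk using Nat.le_induction with
    | base =>
      simp only [sub_self, l1Norm_zero]
      exact le_of_eq rfl
    | succ k hjk ih =>
      have : u (k+1) - u j = (u k - u j) + (-(w k)) := by rw [hstep k]; abel
      rw [this]
      calc l1Norm ((u k - u j) + (-(w k)))
          ≤ l1Norm (u k - u j) + l1Norm (-(w k)) := l1Norm_add_le _ _
        _ = l1Norm (u k - u j) + l1Norm (w k) := by rw [l1Norm_neg]
        _ ≤ (t k - t j) + (t (k+1) - t k) := add_le_add ih (hwbound k)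
        _ = t (k+1) - t j := by ring
  -- Cauchy
  have hcauchy : CauchySeq u := by
    apply cauchySeq_of_le_tendsto_0 (b := fun N => Tlim - t N)
    · intro i j N hi hj
      rcases le_total i j with h | h
      · rw [dist_comm, dist_eq_norm]
        calc ‖u j - u i‖ ≤ l1Norm (u j - u i) := norm_le_l1Norm _
          _ ≤ t j - t i := htel i j h
          _ ≤ Tlim - t N := by
              have := htle j
              have := hmono hi
              linarith
      · rw [dist_eq_norm]
        calc ‖u i - u j‖ ≤ l1Norm (u i - u j) := norm_le_l1Norm _
          _ ≤ t i - t j := htel j i h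
          _ ≤ Tlim - t N := by
              have := htle i
              have := hmono hj
              linarith
    · have := tendsto_const_nhds (x := Tlim) (f := atTop (α := ℕ)) |>.sub htlim
      simpa using this
  obtain ⟨ustar, hustar⟩ := cauchySeq_tendsto_of_complete hcauchy
  refine ⟨ustar, hustar, ?_, ?_⟩
  -- P ustar = 0
  · have hshift : Tendsto (fun k => u (k+1)) atTop (𝓝 ustar) :=
      hustar.comp (tendsto_add_atTop_nat 1)
    have hcont1 : Tendsto (fun k => ‖P (u (k+1))‖) atTop (𝓝 ‖P ustar‖) :=
      ((hP.continuous.tendsto ustar).comp hshift).norm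
    have hΔ0 : Tendsto (fun k => L/2 * (t (k+1) - t k)^2) atTop (𝓝 0) := by
      have h1 : Tendsto (fun k => t (k+1)) atTop (𝓝 Tlim) :=
        htlim.comp (tendsto_add_atTop_nat 1)
      have h2 : Tendsto (fun k => t (k+1) - t k) atTop (𝓝 0) := by
        have := h1.sub htlim
        simpa using this
      have h3 : Tendsto (fun k => (t (k+1) - t k)^2) atTop (𝓝 0) := by
        have := h2.mul h2
        simpa [sq] using this
      have := h3.const_mul (L/2)
      simpa using this
    have hle : ∀ k, ‖P (u (k+1))‖ ≤ L/2 * (t (k+1) - t k)^2 := by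
      intro k
      have h1 := (hinv (k+1)).2
      rw [linfNorm_eq_norm] at h1
      have h2 : fq (t (k+1)) = L/2 * (t (k+1) - t k)^2 := (hprops k).2.2.2.2.2
      rw [h2] at h1
      exact h1
    have hPle : ‖P ustar‖ ≤ 0 := le_of_tendsto_of_tendsto' hcont1 hΔ0 hle
    have : ‖P ustar‖ = 0 := le_antisymm hPle (norm_nonneg _)
    exact norm_eq_zero.mp this
  -- final distance bound
  · rw [hgoalT]
    have hcont2 : Tendsto (fun k => l1Norm (u k - u0)) atTop (𝓝 (l1Norm (ustar - u0))) :=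
      (l1Norm_continuous.tendsto _).comp (hustar.sub tendsto_const_nhds)
    have hlim : l1Norm (ustar - u0) ≤ T :=
      le_of_tendsto hcont2 (Filter.Eventually.of_forall fun k =>
        le_trans (hinv k).1 (ht_le_T k))
    have hflip : l1Norm (u0 - ustar) = l1Norm (ustar - u0) := by
      rw [show u0 - ustar = -(ustar - u0) by abel, l1Norm_neg]
    rw [hflip]
    exact hlim
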